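/- arXiv:1808.05278 — 5 statements merged into one kernel-verified Lean document; each statement's English description precedes it below -/
import Mathlib

section
/- For all positive integers m, n, t, the sum ∑_{i=0}^{t} F_{m+i} F_{n-i} equals [(t+1) L_{m+n} − ∑_{i=0}^{t} (−1)^{n−i} L_{m−n+2i}] / 5, where F denotes the Fibonacci numbers and L the Lucas numbers. -/
/-- Fibonacci numbers extended to integer indices: `F_{-k} = (-1)^(k+1) F_k`. -/
noncomputable def fibZ (n : ℤ) : ℤ :=
  if 0 ≤ n then Nat.fib n.toNat else (-1) ^ (n.natAbs + 1) * Nat.fib n.natAbs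

/-- Lucas numbers extended to integer indices via `L_n = F_{n-1} + F_{n+1}`. -/
noncomputable def lucasZ (n : ℤ) : ℤ := fibZ (n - 1) + fibZ (n + 1)

open goldenRatio

lemma fibZ_real (k : ℤ) : ((fibZ k : ℤ) : ℝ) = (φ ^ k - ψ ^ k) / Real.sqrt 5 := by
  rw [fibZ]
  split_ifs with h
  · push_cast
    rw [Real.coe_fib_eq, ← zpow_natCast φ, ← zpow_natCast ψ, Int.toNat_of_nonneg h]
  · obtain ⟨j, rfl⟩ : ∃ j : ℕ, k = -(j : ℤ) := ⟨k.natAbs, by omega⟩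
    have hja : (-(j:ℤ)).natAbs = j := by omega
    rw [hja]
    push_cast
    rw [Real.coe_fib_eq, zpow_neg, zpow_neg, zpow_natCast, zpow_natCast,
      ← inv_pow, ← inv_pow, Real.inv_goldenRatio, Real.inv_goldenConj,
      show (-ψ:ℝ) = (-1)*ψ from by ring, show (-φ:ℝ) = (-1)*φ from by ring,
      mul_pow, mul_pow, pow_succ]
    ring

lemma lucasZ_real (k : ℤ) : ((lucasZ k : ℤ) : ℝ) = φ ^ k + ψ ^ k := by
  rw [lucasZ]
  push_cast
  rw [fibZ_real, fibZ_real,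
    zpow_sub₀ Real.goldenRatio_ne_zero, zpow_sub₀ Real.goldenConj_ne_zero,
    zpow_add₀ Real.goldenRatio_ne_zero, zpow_add₀ Real.goldenConj_ne_zero,
    zpow_one, zpow_one]
  have hs : Real.sqrt 5 ≠ 0 := by positivity
  have hφψ : φ - ψ = Real.sqrt 5 := Real.goldenRatio_sub_goldenConj
  have hφ : φ ≠ 0 := Real.goldenRatio_ne_zero
  have hψ : ψ ≠ 0 := Real.goldenConj_ne_zero
  rw [← add_div, div_eq_iff hs, div_eq_mul_inv, div_eq_mul_inv,
    Real.inv_goldenRatio, Real.inv_goldenConj]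
  linear_combination (φ ^ k + ψ ^ k) * hφψ

lemma key_real (a b : ℤ) : 5 * ((fibZ a : ℤ) : ℝ) * ((fibZ b : ℤ) : ℝ) =
    ((lucasZ (a + b) : ℤ) : ℝ) - (-1 : ℝ) ^ b * ((lucasZ (a - b) : ℤ) : ℝ) := by
  rw [fibZ_real, fibZ_real, lucasZ_real, lucasZ_real]
  have hneg : ((-1 : ℝ)) ^ b = φ ^ b * ψ ^ b := by
    rw [← mul_zpow, Real.goldenRatio_mul_goldenConj]
  have hX : φ ^ (a - b) * φ ^ b = φ ^ a := by
    rw [← zpow_add₀ Real.goldenRatio_ne_zero, sub_add_cancel]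
  have hY : ψ ^ (a - b) * ψ ^ b = ψ ^ a := by
    rw [← zpow_add₀ Real.goldenConj_ne_zero, sub_add_cancel]
  have h5 : Real.sqrt 5 * Real.sqrt 5 = 5 := Real.mul_self_sqrt (by norm_num)
  rw [hneg, zpow_add₀ Real.goldenRatio_ne_zero, zpow_add₀ Real.goldenConj_ne_zero,
    mul_assoc, div_mul_div_comm, h5]
  linear_combination ψ ^ b * hX + φ ^ b * hY

lemma key_rat (a b : ℤ) : ((fibZ a : ℤ) : ℚ) * ((fibZ b : ℤ) : ℚ) =
    (((lucasZ (a + b) : ℤ) : ℚ) - (-1 : ℚ) ^ b * ((lucasZ (a - b) : ℤ) : ℚ)) / 5 := by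
  apply (Rat.cast_injective (α := ℝ))
  push_cast
  linear_combination (key_real a b) / 5

theorem stmt0 (m n t : ℕ) (hm : 0 < m) (hn : 0 < n) (ht : 0 < t) :
    (∑ i ∈ Finset.range (t + 1),
        ((fibZ ((m : ℤ) + i) : ℚ) * (fibZ ((n : ℤ) - i) : ℚ))) =
      (((t : ℚ) + 1) * (lucasZ ((m : ℤ) + n) : ℚ) -
        ∑ i ∈ Finset.range (t + 1),
          (-1 : ℚ) ^ ((n : ℤ) - i) * (lucasZ ((m : ℤ) - n + 2 * i) : ℚ)) / 5 := by
  have hkey : ∀ i ∈ Finset.range (t + 1),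
      (fibZ ((m : ℤ) + i) : ℚ) * (fibZ ((n : ℤ) - i) : ℚ) =
        ((lucasZ ((m : ℤ) + n) : ℚ) -
          (-1 : ℚ) ^ ((n : ℤ) - i) * (lucasZ ((m : ℤ) - n + 2 * i) : ℚ)) / 5 := by
    intro i _
    have h := key_rat ((m : ℤ) + i) ((n : ℤ) - i)
    rw [show (m : ℤ) + i + ((n : ℤ) - i) = (m : ℤ) + n by ring,
      show (m : ℤ) + i - ((n : ℤ) - i) = (m : ℤ) - n + 2 * i by ring] at h
    exact h
  rw [Finset.sum_congr rfl hkey, ← Finset.sum_div, Finset.sum_sub_distrib,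
    Finset.sum_const, Finset.card_range, nsmul_eq_mul]
  push_cast
  ring
end

section
/- For all positive integers m, n, t with t ≥ 1, the alternating sum ∑_{i=0}^{t-1} (−1)^{n−i−1} L_{m−n+2i} equals (−1)^{n−t} F_{m−n+2t−1} + (−1)^{m−1} F_{n−m+1}. -/
private lemma neg_one_zpow_natAbs (z : ℤ) : (-1:ℚ)^z = (-1:ℚ)^z.natAbs := by
  rcases Int.even_or_odd z with h|h
  · rw [h.neg_one_zpow, (Int.natAbs_even.mpr h).neg_one_pow]
  · rw [h.neg_one_zpow, (Int.natAbs_odd.mpr h).neg_one_pow]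

private lemma fibZ_neg (z : ℤ) : (fibZ (-z) : ℚ) = (-1:ℚ)^(z+1) * (fibZ z : ℚ) := by
  rcases lt_trichotomy z 0 with h | rfl | h
  · have h1 : 0 ≤ -z := by omega
    have h2 : ¬ (0 ≤ z) := by omega
    simp only [fibZ, if_pos h1, if_neg h2]
    rw [neg_one_zpow_natAbs]
    have : (z+1).natAbs = z.natAbs - 1 := by omega
    rw [this]
    have hz1 : 1 ≤ z.natAbs := by omega
    have : (-z).toNat = z.natAbs := by omega
    rw [this]
    push_cast
    rw [show z.natAbs + 1 = (z.natAbs - 1) + 2 by omega]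
    rw [pow_add, show ((-1:ℚ))^2 = 1 by norm_num, mul_one, ← mul_assoc, ← pow_add,
      ← two_mul, pow_mul]
    norm_num
  · simp [fibZ]
  · have h1 : ¬ (0 ≤ -z) := by omega
    have h2 : 0 ≤ z := by omega
    simp only [fibZ, if_neg h1, if_pos h2]
    rw [neg_one_zpow_natAbs]
    have : (-z).natAbs = z.natAbs := by omega
    rw [this]
    have : (z+1).natAbs = z.natAbs + 1 := by omega
    rw [this]
    have : z.toNat = z.natAbs := by omega
    rw [this]
    push_cast
    ring

private lemma key (a : ℤ) (n t : ℕ) (ht : 1 ≤ t) :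
    (∑ i ∈ Finset.range t, (-1:ℚ)^((n:ℤ)-i-1) * (lucasZ (a + 2*i) : ℚ)) =
      (-1:ℚ)^((n:ℤ)-t) * (fibZ (a + 2*t - 1) : ℚ) +
        (-1:ℚ)^((n:ℤ)-1) * (fibZ (a - 1) : ℚ) := by
  induction t with
  | zero => omega
  | succ t ih =>
    rcases Nat.eq_or_lt_of_le ht with h | h
    · have h0 : t = 0 := by omega
      subst h0
      rw [Finset.sum_range_one]
      simp only [lucasZ]
      push_cast
      ring_nf
    · have ht' : 1 ≤ t := by omega
      rw [Finset.sum_range_succ, ih ht']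
      simp only [lucasZ]
      have e1 : (-1:ℚ)^((n:ℤ)-t) = (-1:ℚ)^((n:ℤ)-t-1) * (-1) := by
        rw [← zpow_add_one₀ (by norm_num : (-1:ℚ) ≠ 0)]
        ring_nf
      have e2 : (-1:ℚ)^((n:ℤ)-(t+1:ℕ)) = (-1:ℚ)^((n:ℤ)-t-1) := by
        push_cast; ring_nf
      have e3 : a + 2*(t:ℤ) + 1 = a + 2*((t:ℕ)+1:ℕ) - 1 := by push_cast; ring
      have e4 : a + 2*(t:ℤ) - 1 = a + 2*(t:ℕ) - 1 := by push_cast; ring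
      rw [e1, e2, e3]
      push_cast
      ring

theorem stmt1 (m n t : ℕ) (hm : 0 < m) (hn : 0 < n) (ht : 1 ≤ t) :
    (∑ i ∈ Finset.range t,
        (-1 : ℚ) ^ ((n : ℤ) - i - 1) * (lucasZ ((m : ℤ) - n + 2 * i) : ℚ)) =
      (-1 : ℚ) ^ ((n : ℤ) - t) * (fibZ ((m : ℤ) - n + 2 * t - 1) : ℚ) +
        (-1 : ℚ) ^ ((m : ℤ) - 1) * (fibZ ((n : ℤ) - m + 1) : ℚ) := by
  have h := key ((m:ℤ) - n) n t ht
  rw [h]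
  congr 1
  have hneg : ((n:ℤ) - m + 1) = -(((m:ℤ) - n) - 1) := by ring
  rw [hneg, fibZ_neg]
  rw [← mul_assoc, ← zpow_add₀ (by norm_num : (-1:ℚ) ≠ 0)]
  congr 1
  rw [neg_one_zpow_natAbs, neg_one_zpow_natAbs]
  have hp2 : (((m:ℤ) - 1 + ((m:ℤ) - (n:ℤ) - 1 + 1)).natAbs) % 2 = (((n:ℤ) - 1).natAbs) % 2 := by
    omega
  rcases Nat.even_or_odd (((n:ℤ) - 1).natAbs) with hp | hp
  · rw [Nat.even_iff] at hp
    rw [(Nat.even_iff.mpr hp).neg_one_pow, (Nat.even_iff.mpr (by omega)).neg_one_pow]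
  · rw [Nat.odd_iff] at hp
    rw [(Nat.odd_iff.mpr hp).neg_one_pow, (Nat.odd_iff.mpr (by omega)).neg_one_pow]
end

section
/- For every positive integer n, ∑_{i=1}^{n} F_{n-i+1} F_i = (n L_{n+1} + 2 F_n) / 5, i.e., 5 · ∑_{i=1}^{n} F_i F_{n+1-i} = n L_{n+1} + 2 F_n. -/
/-- Lucas numbers: `L_0 = 2`, `L_n = F_{n-1} + F_{n+1}` for `n ≥ 1`. -/
def lucas : ℕ → ℕ
  | 0 => 2
  | n + 1 => Nat.fib n + Nat.fib (n + 2)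

private def S (m : ℕ) : ℕ := ∑ i ∈ Finset.Icc 1 m, Nat.fib i * Nat.fib (m + 1 - i)

private lemma S_rec (n : ℕ) : S (n + 2) = S (n + 1) + S n + Nat.fib (n + 2) := by
  unfold S
  rw [Finset.sum_Icc_succ_top (by omega : 1 ≤ n + 2)]
  have h1 : ∀ i ∈ Finset.Icc 1 (n + 1),
      Nat.fib i * Nat.fib (n + 2 + 1 - i)
        = Nat.fib i * Nat.fib (n + 1 + 1 - i) + Nat.fib i * Nat.fib (n + 1 - i) := by
    intro i hi
    simp only [Finset.mem_Icc] at hi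
    have : n + 2 + 1 - i = (n + 1 - i) + 2 := by omega
    rw [this, Nat.fib_add_two]
    have : n + 1 + 1 - i = (n + 1 - i) + 1 := by omega
    rw [this]
    ring
  rw [Finset.sum_congr rfl h1, Finset.sum_add_distrib]
  have h2 : ∑ i ∈ Finset.Icc 1 (n + 1), Nat.fib i * Nat.fib (n + 1 - i)
      = ∑ i ∈ Finset.Icc 1 n, Nat.fib i * Nat.fib (n + 1 - i) := by
    rw [Finset.sum_Icc_succ_top (by omega : 1 ≤ n + 1)]
    simp
  rw [h2]
  simp [Nat.fib_add_two]

private lemma key_s3 : ∀ n : ℕ, 5 * S (n + 1) = (n + 1) * lucas (n + 2) + 2 * Nat.fib (n + 1)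
    ∧ 5 * S (n + 2) = (n + 2) * lucas (n + 3) + 2 * Nat.fib (n + 2) := by
  intro n
  induction n with
  | zero => constructor <;> (unfold S; decide)
  | succ m ih =>
    obtain ⟨h1, h2⟩ := ih
    refine ⟨h2, ?_⟩
    rw [S_rec, Nat.mul_add, Nat.mul_add, h2, h1]
    show _ = (m + 3) * lucas (m + 4) + 2 * Nat.fib (m + 3)
    simp only [lucas, show m + 4 = (m + 3) + 1 from rfl, show m + 3 = (m + 2) + 1 from rfl,
      show m + 2 = (m + 1) + 1 from rfl]
    have e3 : Nat.fib (m + 3) = Nat.fib (m + 1) + Nat.fib (m + 2) := Nat.fib_add_two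
    have e4 : Nat.fib (m + 4) = Nat.fib (m + 2) + Nat.fib (m + 3) := Nat.fib_add_two
    have e5 : Nat.fib (m + 5) = Nat.fib (m + 3) + Nat.fib (m + 4) := Nat.fib_add_two
    rw [e5, e4, e3]
    ring

theorem stmt3 (n : ℕ) (hn : 0 < n) :
    5 * (∑ i ∈ Finset.Icc 1 n, Nat.fib i * Nat.fib (n + 1 - i)) =
      n * lucas (n + 1) + 2 * Nat.fib n := by
  obtain ⟨m, rfl⟩ : ∃ m, n = m + 1 := ⟨n - 1, by omega⟩
  exact (key_s3 m).1
end

section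
/- Let B be the n×n matrix with entries B_{ij} = F_i F_{n-j+1} and Q an n×n matrix whose columns are eigenvectors of B (first column u_i = F_i, remaining columns in the kernel of B). Then for every k ≥ 1, B^k Q = Q D^k where D is diagonal with D_{11} = (n L_{n+1} + 2 F_n)/5 and all other diagonal entries 0. -/
lemma Trec (n : ℕ) :
    (∑ l ∈ Finset.range (n+2), Nat.fib (l+1) * Nat.fib (n+2-l)) =
    (∑ l ∈ Finset.range (n+1), Nat.fib (l+1) * Nat.fib (n+1-l)) +
    (∑ l ∈ Finset.range n, Nat.fib (l+1) * Nat.fib (n-l)) + Nat.fib (n+2) := by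
  rw [Finset.sum_range_succ]
  have h1 : n + 2 - (n+1) = 1 := by omega
  rw [h1, Nat.fib_one, mul_one]
  have h2 : ∑ l ∈ Finset.range (n+1), Nat.fib (l+1) * Nat.fib (n+2-l) =
      ∑ l ∈ Finset.range (n+1), (Nat.fib (l+1) * Nat.fib (n+1-l) + Nat.fib (l+1) * Nat.fib (n-l)) := by
    refine Finset.sum_congr rfl fun l hl => ?_
    have hl' : l ≤ n := by simpa [Nat.lt_succ_iff] using hl
    have e1 : n + 2 - l = (n - l) + 2 := by omega
    have e2 : n + 1 - l = (n - l) + 1 := by omega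
    rw [e1, e2, Nat.fib_add_two, mul_add, add_comm]
  rw [h2, Finset.sum_add_distrib]
  have h3 : ∑ l ∈ Finset.range (n+1), Nat.fib (l+1) * Nat.fib (n-l) =
      ∑ l ∈ Finset.range n, Nat.fib (l+1) * Nat.fib (n-l) := by
    rw [Finset.sum_range_succ]
    simp
  rw [h3]

lemma keyT (n : ℕ) :
    5 * ∑ l ∈ Finset.range n, Nat.fib (l+1) * Nat.fib (n - l) =
      n * lucas (n+1) + 2 * Nat.fib n := by
  induction n using Nat.twoStepInduction with
  | zero => decide
  | one => decide
  | more n ih1 ih2 =>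
    rw [Trec, Nat.mul_add, Nat.mul_add, ih1, ih2]
    simp only [lucas]
    have h2 : Nat.fib (n+2) = Nat.fib n + Nat.fib (n+1) := Nat.fib_add_two
    have h3 : Nat.fib (n+3) = Nat.fib (n+1) + Nat.fib (n+2) := Nat.fib_add_two
    have h4 : Nat.fib (n+4) = Nat.fib (n+2) + Nat.fib (n+3) := Nat.fib_add_two
    rw [h4, h3, h2]
    ring

open Matrix in
theorem stmt8 (n k : ℕ) (hn : 0 < n) (hk : 1 ≤ k) (Q : Matrix (Fin n) (Fin n) ℚ)
    (hQ0 : ∀ i : Fin n, Q i ⟨0, hn⟩ = ((Nat.fib (i + 1) : ℕ) : ℚ))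
    (hQker : ∀ j : Fin n, j ≠ ⟨0, hn⟩ →
      (Matrix.of fun i j' : Fin n => ((Nat.fib (i + 1) * Nat.fib (n - j') : ℕ) : ℚ)) *ᵥ
        (fun i => Q i j) = 0) :
    (Matrix.of fun i j : Fin n =>
        ((Nat.fib (i + 1) * Nat.fib (n - j) : ℕ) : ℚ)) ^ k * Q =
      Q * (Matrix.diagonal fun j : Fin n =>
        if j = ⟨0, hn⟩ then
          (((n * lucas (n + 1) + 2 * Nat.fib n : ℕ) : ℚ)) / 5 else 0) ^ k := by
  set B : Matrix (Fin n) (Fin n) ℚ :=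
    Matrix.of fun i j : Fin n => ((Nat.fib (i + 1) * Nat.fib (n - j) : ℕ) : ℚ) with hB
  set D : Matrix (Fin n) (Fin n) ℚ :=
    Matrix.diagonal fun j : Fin n =>
      if j = ⟨0, hn⟩ then (((n * lucas (n + 1) + 2 * Nat.fib n : ℕ) : ℚ)) / 5 else 0 with hD
  have step1 : B * Q = Q * D := by
    ext i j
    rw [Matrix.mul_apply, hD, Matrix.mul_diagonal]
    by_cases hj : j = ⟨0, hn⟩
    · subst hj
      rw [if_pos rfl]
      have hsum : ∀ l : Fin n, B i l * Q l ⟨0, hn⟩ =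
          ((Nat.fib (i + 1) : ℕ) : ℚ) * ((Nat.fib (l + 1) * Nat.fib (n - l) : ℕ) : ℚ) := by
        intro l
        simp only [hB, Matrix.of_apply, hQ0 l]
        push_cast
        ring
      rw [Finset.sum_congr rfl fun l _ => hsum l, ← Finset.mul_sum, hQ0 i]
      congr 1
      have : ∑ l : Fin n, ((Nat.fib (l + 1) * Nat.fib (n - l) : ℕ) : ℚ) =
          ((∑ l ∈ Finset.range n, Nat.fib (l + 1) * Nat.fib (n - l) : ℕ) : ℚ) := by
        rw [Nat.cast_sum]
        exact Fin.sum_univ_eq_sum_range (fun l => ((Nat.fib (l + 1) * Nat.fib (n - l) : ℕ) : ℚ)) n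
      rw [this, eq_div_iff (by norm_num : (5:ℚ) ≠ 0)]
      rw [mul_comm, ← Nat.cast_ofNat, ← Nat.cast_mul, keyT n]
    · rw [if_neg hj, mul_zero]
      have := congrFun (hQker j hj) i
      simpa [Matrix.mulVec, dotProduct, hB] using this
  clear hk
  induction k with
  | zero => simp
  | succ k ih =>
    rw [pow_succ, pow_succ, Matrix.mul_assoc (B ^ k), step1, ← Matrix.mul_assoc, ih, Matrix.mul_assoc]
end

section
/- For 2 ≤ k ≤ n+1, let T(n,k) be the n×n matrix with entries T_{ij} = F_i F_{n-j+1} if k ≤ i+j ≤ n+1 and T_{ij} = 0 otherwise. Then det(T(n,k)) = (−1)^{n(n-1)/2} ∏_{i=1}^{n} F_i². In particular, the determinant is ∏_{i=1}^n F_i² if n ≡ 0 or 1 (mod 4), and −∏_{i=1}^n F_i² if n ≡ 2 or 3 (mod 4), and is independent of k. -/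
open Equiv Equiv.Perm

lemma revPerm_decompose (n : ℕ) :
    (Fin.revPerm : Perm (Fin (n + 1))) =
      (Equiv.Perm.decomposeFin.symm (0, (Fin.revPerm : Perm (Fin n)))) * finRotate (n + 1) := by
  ext i
  refine Fin.lastCases ?_ (fun x => ?_) i
  · simp [Perm.mul_apply, finRotate_last]
  · rw [Perm.mul_apply]
    have h1 : finRotate (n + 1) x.castSucc = x.succ := by
      rw [finRotate_succ_apply, Fin.coeSucc_eq_succ]
    rw [h1]
    simp [Fin.rev_castSucc]

lemma sign_revPerm (n : ℕ) :
    Perm.sign (Fin.revPerm : Perm (Fin n)) = (-1 : ℤˣ) ^ (n * (n - 1) / 2) := by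
  induction n with
  | zero => simp [Subsingleton.elim (Fin.revPerm : Perm (Fin 0)) 1]
  | succ n ih =>
    rw [revPerm_decompose, map_mul, Equiv.Perm.decomposeFin.symm_sign, sign_finRotate, ih,
      if_pos rfl, one_mul]
    have he : (n + 1) * (n + 1 - 1) / 2 = n * (n - 1) / 2 + n := by
      have h1 : (n + 1) * (n + 1 - 1) = n * (n - 1) + 2 * n := by
        cases n with
        | zero => rfl
        | succ m => simp only [Nat.add_sub_cancel]; ring
      rw [h1, Nat.add_mul_div_left _ _ (by norm_num : 0 < 2)]
    rw [he, pow_add, Nat.add_sub_cancel]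

lemma half_even (n : ℕ) (h : n % 4 = 0 ∨ n % 4 = 1) : Even (n * (n - 1) / 2) := by
  obtain ⟨q, hq⟩ : ∃ q, n = 4 * q + n % 4 := ⟨n / 4, by omega⟩
  rcases h with h | h
  · rw [h, Nat.add_zero] at hq
    subst hq
    have h1 : 4 * q * (4 * q - 1) = 2 * (2 * q * (4 * q - 1)) := by ring
    rw [h1, Nat.mul_div_cancel_left _ (by norm_num : 0 < 2)]
    exact ⟨q * (4 * q - 1), by ring⟩
  · rw [h] at hq
    subst hq
    have h1 : (4 * q + 1) * (4 * q + 1 - 1) = 2 * (2 * (q * (4 * q + 1))) := by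
      rw [Nat.add_sub_cancel]; ring
    rw [h1, Nat.mul_div_cancel_left _ (by norm_num : 0 < 2)]
    exact ⟨q * (4 * q + 1), by ring⟩

lemma half_odd (n : ℕ) (h : n % 4 = 2 ∨ n % 4 = 3) : Odd (n * (n - 1) / 2) := by
  obtain ⟨q, hq⟩ : ∃ q, n = 4 * q + n % 4 := ⟨n / 4, by omega⟩
  rcases h with h | h
  · rw [h] at hq
    subst hq
    have h1 : (4 * q + 2) * (4 * q + 2 - 1) = 2 * ((2 * q + 1) * (4 * q + 1)) := by
      rw [show 4 * q + 2 - 1 = 4 * q + 1 by omega]; ring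
    rw [h1, Nat.mul_div_cancel_left _ (by norm_num : 0 < 2)]
    exact ⟨4 * q * q + 3 * q, by ring⟩
  · rw [h] at hq
    subst hq
    have h1 : (4 * q + 3) * (4 * q + 3 - 1) = 2 * ((4 * q + 3) * (2 * q + 1)) := by
      rw [show 4 * q + 3 - 1 = 4 * q + 2 by omega]; ring
    rw [h1, Nat.mul_div_cancel_left _ (by norm_num : 0 < 2)]
    exact ⟨4 * q * q + 5 * q + 1, by ring⟩

theorem stmt19 (n k : ℕ) (hn : 2 ≤ n) (hk2 : 2 ≤ k) (hkn : k ≤ n + 1) :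
    (Matrix.of fun i j : Fin n =>
        if k ≤ ((i : ℕ) + 1) + ((j : ℕ) + 1) ∧ ((i : ℕ) + 1) + ((j : ℕ) + 1) ≤ n + 1 then
          ((Nat.fib (i + 1) * Nat.fib (n - j) : ℕ) : ℤ)
        else 0).det =
      (-1 : ℤ) ^ (n * (n - 1) / 2) * ∏ i ∈ Finset.Icc 1 n, ((Nat.fib i : ℕ) : ℤ) ^ 2 ∧
    ((n % 4 = 0 ∨ n % 4 = 1) →
      (Matrix.of fun i j : Fin n =>
        if k ≤ ((i : ℕ) + 1) + ((j : ℕ) + 1) ∧ ((i : ℕ) + 1) + ((j : ℕ) + 1) ≤ n + 1 then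
          ((Nat.fib (i + 1) * Nat.fib (n - j) : ℕ) : ℤ)
        else 0).det = ∏ i ∈ Finset.Icc 1 n, ((Nat.fib i : ℕ) : ℤ) ^ 2) ∧
    ((n % 4 = 2 ∨ n % 4 = 3) →
      (Matrix.of fun i j : Fin n =>
        if k ≤ ((i : ℕ) + 1) + ((j : ℕ) + 1) ∧ ((i : ℕ) + 1) + ((j : ℕ) + 1) ≤ n + 1 then
          ((Nat.fib (i + 1) * Nat.fib (n - j) : ℕ) : ℤ)
        else 0).det = -∏ i ∈ Finset.Icc 1 n, ((Nat.fib i : ℕ) : ℤ) ^ 2) := by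
  set M : Matrix (Fin n) (Fin n) ℤ := Matrix.of fun i j : Fin n =>
      if k ≤ ((i : ℕ) + 1) + ((j : ℕ) + 1) ∧ ((i : ℕ) + 1) + ((j : ℕ) + 1) ≤ n + 1 then
        ((Nat.fib (i + 1) * Nat.fib (n - j) : ℕ) : ℤ)
      else 0 with hM
  have hN : (M.submatrix id ⇑(Fin.revPerm : Perm (Fin n))).det =
      ∏ i ∈ Finset.Icc 1 n, ((Nat.fib i : ℕ) : ℤ) ^ 2 := by
    rw [Matrix.det_of_upperTriangular]
    · have hdiag : ∀ i : Fin n,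
          (M.submatrix id ⇑(Fin.revPerm : Perm (Fin n))) i i = ((Nat.fib (i + 1) : ℕ) : ℤ) ^ 2 := by
        intro i
        have hi : (i : ℕ) < n := i.isLt
        have hrev : (((Fin.revPerm : Perm (Fin n)) i : Fin n) : ℕ) = n - ((i : ℕ) + 1) := by
          simp [Fin.val_rev]
        simp only [Matrix.submatrix_apply, id, hM, Matrix.of_apply, hrev]
        rw [if_pos (by omega)]
        have : n - (n - ((i : ℕ) + 1)) = (i : ℕ) + 1 := by omega
        rw [this]
        push_cast
        ring
      rw [Finset.prod_congr rfl (fun i _ => hdiag i)]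
      rw [Fin.prod_univ_eq_prod_range (fun i => ((Nat.fib (i + 1) : ℕ) : ℤ) ^ 2) n]
      rw [show Finset.Icc 1 n = Finset.Ico 1 (n + 1) by rw [Finset.Ico_add_one_right_eq_Icc],
        Finset.prod_Ico_eq_prod_range]
      simp [Nat.add_comm]
    · intro i j hij
      have hij' : (j : ℕ) < (i : ℕ) := hij
      have hrev : (((Fin.revPerm : Perm (Fin n)) j : Fin n) : ℕ) = n - ((j : ℕ) + 1) := by
        simp [Fin.val_rev]
      have hjn : (j : ℕ) < n := j.isLt
      simp only [Matrix.submatrix_apply, id, hM, Matrix.of_apply, hrev]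
      rw [if_neg (by omega)]
  have hsign := Matrix.det_permute' (Fin.revPerm : Perm (Fin n)) M
  have hMdet : M.det = (-1 : ℤ) ^ (n * (n - 1) / 2) *
      ∏ i ∈ Finset.Icc 1 n, ((Nat.fib i : ℕ) : ℤ) ^ 2 := by
    simp only [Int.cast_id] at hsign
    rw [hN] at hsign
    have hs2 : ((Perm.sign (Fin.revPerm : Perm (Fin n)) : ℤˣ) : ℤ) *
        ((Perm.sign (Fin.revPerm : Perm (Fin n)) : ℤˣ) : ℤ) = 1 := by
      rw [← Units.val_mul, Int.units_mul_self, Units.val_one]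
    have h2 : M.det = ((Perm.sign (Fin.revPerm : Perm (Fin n)) : ℤˣ) : ℤ) *
        ∏ i ∈ Finset.Icc 1 n, ((Nat.fib i : ℕ) : ℤ) ^ 2 := by
      rw [hsign, ← mul_assoc, hs2, one_mul]
    rw [h2, sign_revPerm]
    norm_num
  refine ⟨hMdet, fun h => ?_, fun h => ?_⟩
  · rw [hMdet, (half_even n h).neg_one_pow, one_mul]
  · rw [hMdet, (half_odd n h).neg_one_pow, neg_one_mul]
end
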